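/- A set X ⊆ ℝ^d is Capra-convex if and only if X = ρ⁻¹(cl conv(ρ(X))), i.e., X equals the preimage under the radial projection of the closed convex hull of its radial projection. -/

import Mathlib

open Classical in
noncomputable def radProj {d : ℕ} (N : EuclideanSpace ℝ (Fin d) → ℝ)
    (x : EuclideanSpace ℝ (Fin d)) : EuclideanSpace ℝ (Fin d) :=
  if x = 0 then 0 else (N x)⁻¹ • x

noncomputable def capraConj {d : ℕ} (N : EuclideanSpace ℝ (Fin d) → ℝ)
    (f : EuclideanSpace ℝ (Fin d) → EReal) (y : EuclideanSpace ℝ (Fin d)) : EReal :=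
  ⨆ x : EuclideanSpace ℝ (Fin d), ((inner ℝ (radProj N x) y : ℝ) : EReal) - f x

noncomputable def capraBiconj {d : ℕ} (N : EuclideanSpace ℝ (Fin d) → ℝ)
    (f : EuclideanSpace ℝ (Fin d) → EReal) (x : EuclideanSpace ℝ (Fin d)) : EReal :=
  ⨆ y : EuclideanSpace ℝ (Fin d), ((inner ℝ (radProj N x) y : ℝ) : EReal) - capraConj N f y

open Classical in
noncomputable def ind {d : ℕ} (X : Set (EuclideanSpace ℝ (Fin d)))
    (x : EuclideanSpace ℝ (Fin d)) : EReal :=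
  if x ∈ X then 0 else ⊤

def IsCapraConvex {d : ℕ} (N : EuclideanSpace ℝ (Fin d) → ℝ)
    (X : Set (EuclideanSpace ℝ (Fin d))) : Prop :=
  ind X = capraBiconj N (ind X)

def coneHull {d : ℕ} (A : Set (EuclideanSpace ℝ (Fin d))) : Set (EuclideanSpace ℝ (Fin d)) :=
  {y | ∃ a ∈ A, ∃ l : ℝ, 0 < l ∧ y = l • a}

variable {d : ℕ}


lemma N_nonneg {N : EuclideanSpace ℝ (Fin d) → ℝ}
    (hN0 : ∀ x : EuclideanSpace ℝ (Fin d), N x = 0 ↔ x = 0)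
    (hNh : ∀ (a : ℝ) (x : EuclideanSpace ℝ (Fin d)), N (a • x) = |a| * N x)
    (hNt : ∀ x y : EuclideanSpace ℝ (Fin d), N (x + y) ≤ N x + N y)
    (x : EuclideanSpace ℝ (Fin d)) : 0 ≤ N x := by
  have h1 : N 0 = 0 := (hN0 0).mpr rfl
  have h2 : N (-x) = N x := by
    have := hNh (-1) x
    simpa using this
  have h3 := hNt x (-x)
  simp [h1, h2] at h3
  linarith

lemma N_pos {N : EuclideanSpace ℝ (Fin d) → ℝ}
    (hN0 : ∀ x : EuclideanSpace ℝ (Fin d), N x = 0 ↔ x = 0)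
    (hNh : ∀ (a : ℝ) (x : EuclideanSpace ℝ (Fin d)), N (a • x) = |a| * N x)
    (hNt : ∀ x y : EuclideanSpace ℝ (Fin d), N (x + y) ≤ N x + N y)
    {x : EuclideanSpace ℝ (Fin d)} (hx : x ≠ 0) : 0 < N x :=
  lt_of_le_of_ne (N_nonneg hN0 hNh hNt x) (fun h => hx ((hN0 x).mp h.symm))

lemma N_continuous {N : EuclideanSpace ℝ (Fin d) → ℝ}
    (hNh : ∀ (a : ℝ) (x : EuclideanSpace ℝ (Fin d)), N (a • x) = |a| * N x)
    (hNt : ∀ x y : EuclideanSpace ℝ (Fin d), N (x + y) ≤ N x + N y) :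
    Continuous N := by
  have hconv : ConvexOn ℝ Set.univ N := by
    refine ⟨convex_univ, fun a _ b _ s t hs ht hst => ?_⟩
    calc N (s • a + t • b) ≤ N (s • a) + N (t • b) := hNt _ _
    _ = s * N a + t * N b := by rw [hNh, hNh, abs_of_nonneg hs, abs_of_nonneg ht]
  exact hconv.locallyLipschitz.continuous

lemma radProj_bounded {N : EuclideanSpace ℝ (Fin d) → ℝ}
    (hN0 : ∀ x : EuclideanSpace ℝ (Fin d), N x = 0 ↔ x = 0)
    (hNh : ∀ (a : ℝ) (x : EuclideanSpace ℝ (Fin d)), N (a • x) = |a| * N x)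
    (hNt : ∀ x y : EuclideanSpace ℝ (Fin d), N (x + y) ≤ N x + N y) :
    ∃ M : ℝ, ∀ x, ‖radProj N x‖ ≤ M := by
  by_cases htriv : ∀ x : EuclideanSpace ℝ (Fin d), x = 0
  · exact ⟨0, fun x => by simp [radProj, htriv x]⟩
  push_neg at htriv
  obtain ⟨x0, hx0⟩ := htriv
  have hsne : (Metric.sphere (0 : EuclideanSpace ℝ (Fin d)) 1).Nonempty := by
    refine ⟨‖x0‖⁻¹ • x0, ?_⟩
    simp [norm_smul, abs_of_nonneg (inv_nonneg.mpr (norm_nonneg x0)),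
      inv_mul_cancel₀ (norm_ne_zero_iff.mpr hx0)]
  obtain ⟨u, hu, hmin⟩ := (isCompact_sphere (0 : EuclideanSpace ℝ (Fin d)) 1).exists_isMinOn
    hsne (N_continuous hNh hNt).continuousOn
  have hu0 : u ≠ 0 := by
    intro h
    rw [h] at hu
    simp at hu
  have hc : 0 < N u := N_pos hN0 hNh hNt hu0
  refine ⟨(N u)⁻¹, fun x => ?_⟩
  by_cases hx : x = 0
  · simp [radProj, hx, inv_nonneg.mpr hc.le]
  · have hxn : (0:ℝ) < ‖x‖ := norm_pos_iff.mpr hx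
    have hmem : ‖x‖⁻¹ • x ∈ Metric.sphere (0 : EuclideanSpace ℝ (Fin d)) 1 := by
      simp [norm_smul, abs_of_nonneg (inv_nonneg.mpr hxn.le), inv_mul_cancel₀ hxn.ne']
    have hle : N u ≤ N (‖x‖⁻¹ • x) := hmin hmem
    have hNx : N (‖x‖⁻¹ • x) = ‖x‖⁻¹ * N x := by
      rw [hNh, abs_of_nonneg (inv_nonneg.mpr hxn.le)]
    rw [hNx] at hle
    have hNxpos : 0 < N x := N_pos hN0 hNh hNt hx
    have hval : ‖radProj N x‖ = (N x)⁻¹ * ‖x‖ := by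
      simp only [radProj, if_neg hx, norm_smul, Real.norm_eq_abs]
      rw [abs_of_nonneg (inv_nonneg.mpr hNxpos.le)]
    have key : N u * ‖x‖ ≤ N x := by
      have := mul_le_mul_of_nonneg_right hle hxn.le
      calc N u * ‖x‖ ≤ ‖x‖⁻¹ * N x * ‖x‖ := this
      _ = N x := by field_simp
    have h2' : ‖x‖ ≤ (N u)⁻¹ * N x := by
      calc ‖x‖ = (N u)⁻¹ * (N u * ‖x‖) := by field_simp
      _ ≤ (N u)⁻¹ * N x := mul_le_mul_of_nonneg_left key (inv_nonneg.mpr hc.le)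
    calc ‖radProj N x‖ = (N x)⁻¹ * ‖x‖ := hval
    _ ≤ (N x)⁻¹ * ((N u)⁻¹ * N x) := mul_le_mul_of_nonneg_left h2' (inv_nonneg.mpr hNxpos.le)
    _ = (N u)⁻¹ := by field_simp

lemma ind_apply_mem {X : Set (EuclideanSpace ℝ (Fin d))} {x : EuclideanSpace ℝ (Fin d)}
    (hx : x ∈ X) : ind X x = 0 := by simp [ind, hx]

lemma ind_apply_not_mem {X : Set (EuclideanSpace ℝ (Fin d))} {x : EuclideanSpace ℝ (Fin d)}
    (hx : x ∉ X) : ind X x = ⊤ := by simp [ind, hx]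

lemma biconj_ind {N : EuclideanSpace ℝ (Fin d) → ℝ}
    (hN0 : ∀ x : EuclideanSpace ℝ (Fin d), N x = 0 ↔ x = 0)
    (hNh : ∀ (a : ℝ) (x : EuclideanSpace ℝ (Fin d)), N (a • x) = |a| * N x)
    (hNt : ∀ x y : EuclideanSpace ℝ (Fin d), N (x + y) ≤ N x + N y)
    (X : Set (EuclideanSpace ℝ (Fin d))) :
    capraBiconj N (ind X) =
      ind (radProj N ⁻¹' closure (convexHull ℝ (radProj N '' X))) := by
  classical
  rcases X.eq_empty_or_nonempty with rfl | ⟨x0, hx0⟩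
  · have hconj : ∀ y, capraConj N (ind (∅ : Set (EuclideanSpace ℝ (Fin d)))) y = ⊥ := by
      intro y
      simp [capraConj, ind, EReal.sub_top]
    funext x
    simp [capraBiconj, hconj, EReal.coe_sub_bot, ind]
  · obtain ⟨M, hM⟩ := radProj_bounded hN0 hNh hNt
    set S : Set (EuclideanSpace ℝ (Fin d)) := radProj N '' X with hS
    have hSne : S.Nonempty := ⟨_, ⟨x0, hx0, rfl⟩⟩
    set A : EuclideanSpace ℝ (Fin d) → Set ℝ :=
      fun y => (fun s => (inner ℝ s y : ℝ)) '' S with hA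
    have hAne : ∀ y, (A y).Nonempty := fun y => hSne.image _
    have hAbdd : ∀ y, BddAbove (A y) := by
      intro y
      refine ⟨M * ‖y‖, ?_⟩
      rintro _ ⟨s, ⟨x, hx, rfl⟩, rfl⟩
      calc (inner ℝ (radProj N x) y : ℝ) ≤ ‖radProj N x‖ * ‖y‖ := real_inner_le_norm _ _
      _ ≤ M * ‖y‖ := mul_le_mul_of_nonneg_right (hM x) (norm_nonneg y)
    set σ : EuclideanSpace ℝ (Fin d) → ℝ := fun y => sSup (A y) with hσ
    have hσub : ∀ y, ∀ s ∈ S, (inner ℝ s y : ℝ) ≤ σ y :=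
      fun y s hs => le_csSup (hAbdd y) ⟨s, hs, rfl⟩
    have hconj : ∀ y, capraConj N (ind X) y = (σ y : EReal) := by
      intro y
      have h1 : capraConj N (ind X) y ≤ (σ y : EReal) := by
        apply iSup_le; intro x
        by_cases hx : x ∈ X
        · rw [ind_apply_mem hx, sub_zero]
          exact EReal.coe_le_coe_iff.mpr (hσub y _ ⟨x, hx, rfl⟩)
        · rw [ind_apply_not_mem hx, EReal.sub_top]; exact bot_le
      have h2 : ∀ x ∈ X, ((inner ℝ (radProj N x) y : ℝ) : EReal) ≤ capraConj N (ind X) y := by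
        intro x hx
        refine le_iSup_of_le x ?_
        rw [ind_apply_mem hx, sub_zero]
      have hne_bot : capraConj N (ind X) y ≠ ⊥ := by
        intro h
        have := h2 x0 hx0
        rw [h, le_bot_iff] at this
        exact EReal.coe_ne_bot _ this
      have hne_top : capraConj N (ind X) y ≠ ⊤ := by
        intro h
        rw [h, top_le_iff] at h1
        exact EReal.coe_ne_top _ h1
      set r := (capraConj N (ind X) y).toReal with hrdef
      have hr : capraConj N (ind X) y = (r : EReal) := (EReal.coe_toReal hne_top hne_bot).symm
      rw [hr]
      norm_cast
      apply le_antisymm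
      · rw [hr] at h1; exact_mod_cast h1
      · apply csSup_le (hAne y)
        rintro _ ⟨s, ⟨x, hx, rfl⟩, rfl⟩
        have := h2 x hx
        rw [hr] at this
        exact_mod_cast this
    have hbi : ∀ x, capraBiconj N (ind X) x =
        ⨆ y, (((inner ℝ (radProj N x) y : ℝ) - σ y : ℝ) : EReal) := by
      intro x
      simp only [capraBiconj]
      refine iSup_congr fun y => ?_
      rw [hconj y, ← EReal.coe_sub]
    funext x
    by_cases hmem : radProj N x ∈ closure (convexHull ℝ S)
    · rw [hbi, ind_apply_mem (show x ∈ radProj N ⁻¹' closure (convexHull ℝ S) from hmem)]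
      apply le_antisymm
      · apply iSup_le; intro y
        have hle : (inner ℝ (radProj N x) y : ℝ) ≤ σ y := by
          have hsub : closure (convexHull ℝ S) ⊆ {z | (inner ℝ z y : ℝ) ≤ σ y} := by
            apply closure_minimal
            · apply convexHull_min (hσub y)
              have hlin : IsLinearMap ℝ (fun z : EuclideanSpace ℝ (Fin d) => (inner ℝ z y : ℝ)) :=
                ⟨fun a b => inner_add_left a b y, fun c a => real_inner_smul_left a y c⟩
              exact convex_halfSpace_le hlin _
            · exact isClosed_le (continuous_id.inner continuous_const) continuous_const
          exact hsub hmem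
        rw [show (0 : EReal) = ((0 : ℝ) : EReal) from rfl]
        exact EReal.coe_le_coe_iff.mpr (by linarith)
      · have h0 : σ 0 = 0 := by
          have himg : A 0 = {0} := by
            ext r
            simp only [hA, Set.mem_image, Set.mem_singleton_iff]
            constructor
            · rintro ⟨s, hs, rfl⟩
              exact inner_zero_right s
            · rintro rfl
              obtain ⟨s, hs⟩ := hSne
              exact ⟨s, hs, inner_zero_right s⟩
          show sSup (A 0) = 0
          rw [himg]; exact csSup_singleton 0
        calc (0 : EReal)
            = (((inner ℝ (radProj N x) (0 : EuclideanSpace ℝ (Fin d)) : ℝ) - σ 0 : ℝ) : EReal) := by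
              simp [h0]
        _ ≤ _ := le_iSup (fun y => (((inner ℝ (radProj N x) y : ℝ) - σ y : ℝ) : EReal)) 0
    · rw [hbi, ind_apply_not_mem (show x ∉ radProj N ⁻¹' closure (convexHull ℝ S) from hmem), EReal.eq_top_iff_forall_lt]
      intro C
      obtain ⟨f, r, hfx, hfb⟩ := geometric_hahn_banach_point_closed
        (convex_convexHull ℝ S).closure isClosed_closure hmem
      set y : EuclideanSpace ℝ (Fin d) := -((InnerProductSpace.toDual ℝ _).symm f) with hy0
      have hy : ∀ z, (inner ℝ z y : ℝ) = -(f z) := by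
        intro z
        rw [real_inner_comm, hy0, inner_neg_left, InnerProductSpace.toDual_symm_apply]
      have hσy : σ y ≤ -r := by
        apply csSup_le (hAne y)
        rintro _ ⟨s, hs, rfl⟩
        show (inner ℝ s y : ℝ) ≤ -r
        rw [hy]
        have := hfb s (subset_closure (subset_convexHull ℝ S hs))
        linarith
      set δ : ℝ := (inner ℝ (radProj N x) y : ℝ) - σ y with hδdef
      have hδ : 0 < δ := by
        rw [hδdef, hy]
        linarith
      set t : ℝ := max 0 ((C + 1) / δ) with ht0
      have ht : 0 ≤ t := le_max_left _ _
      have htC : C < t * δ := by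
        rcases le_or_gt 0 ((C + 1) / δ) with h | h
        · have h2 : (C + 1) / δ ≤ t := le_max_right _ _
          have : (C + 1) ≤ t * δ := by
            calc C + 1 = ((C + 1) / δ) * δ := by field_simp
            _ ≤ t * δ := mul_le_mul_of_nonneg_right h2 hδ.le
          linarith
        · have hC : C + 1 < 0 := by
            by_contra h'
            push_neg at h'
            exact absurd (div_nonneg h' hδ.le) (not_le.mpr h)
          have : t = 0 := by
            rw [ht0, max_eq_left (le_of_lt (div_neg_of_neg_of_pos hC hδ))]
          rw [this]; linarith
      have hterm : t * δ ≤ (inner ℝ (radProj N x) (t • y) : ℝ) - σ (t • y) := by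
        have hσt : σ (t • y) ≤ t * σ y := by
          apply csSup_le (hAne _)
          rintro _ ⟨s, hs, rfl⟩
          show (inner ℝ s (t • y) : ℝ) ≤ t * σ y
          rw [real_inner_smul_right]
          exact mul_le_mul_of_nonneg_left (hσub y s hs) ht
        rw [real_inner_smul_right]
        rw [hδdef]
        nlinarith [hσt]
      refine lt_of_lt_of_le ?_ (le_iSup _ (t • y))
      exact lt_of_lt_of_le (EReal.coe_lt_coe_iff.mpr htC) (EReal.coe_le_coe_iff.mpr hterm)

lemma ind_inj {A B : Set (EuclideanSpace ℝ (Fin d))} (h : ind A = ind B) : A = B := by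
  ext x
  have hx := congrFun h x
  constructor
  · intro hxa
    by_contra hxb
    rw [ind_apply_mem hxa, ind_apply_not_mem hxb] at hx
    simp at hx
  · intro hxb
    by_contra hxa
    rw [ind_apply_not_mem hxa, ind_apply_mem hxb] at hx
    simp at hx

theorem stmt {d : ℕ} (N : EuclideanSpace ℝ (Fin d) → ℝ)
    (hN0 : ∀ x : EuclideanSpace ℝ (Fin d), N x = 0 ↔ x = 0)
    (hNh : ∀ (a : ℝ) (x : EuclideanSpace ℝ (Fin d)), N (a • x) = |a| * N x)
    (hNt : ∀ x y : EuclideanSpace ℝ (Fin d), N (x + y) ≤ N x + N y)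
    (X : Set (EuclideanSpace ℝ (Fin d))) :
    IsCapraConvex N X ↔ X = radProj N ⁻¹' closure (convexHull ℝ (radProj N '' X)) := by
  unfold IsCapraConvex
  rw [biconj_ind hN0 hNh hNt X]
  exact ⟨fun h => ind_inj h, fun h => by rw [← h]⟩
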